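/- Two graphs Γ₁ and Γ₂ on the same vertex set V are associated to the same two-graph if and only if they are switching equivalent. -/

import Mathlib

open scoped Classical in
/-- Seidel switching of a graph with respect to a vertex subset `Y`. -/
noncomputable def SimpleGraph.switch {V : Type*} (G : SimpleGraph V) (Y : Set V) :
    SimpleGraph V where
  Adj u v := u ≠ v ∧ if (u ∈ Y) = (v ∈ Y) then G.Adj u v else ¬ G.Adj u v
  symm := ⟨by
    rintro u v ⟨hne, h⟩
    refine ⟨hne.symm, ?_⟩
    by_cases hm : (u ∈ Y) = (v ∈ Y)
    · rw [if_pos hm] at h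
      rw [if_pos hm.symm]
      exact h.symm
    · rw [if_neg hm] at h
      rw [if_neg fun he => hm he.symm]
      exact fun ha => h ha.symm⟩
  loopless := ⟨fun u h => h.1 rfl⟩

open scoped Classical in
/-- The number of edges of `G` contained in the finite vertex set `t`. -/
noncomputable def SimpleGraph.edgeCountIn {V : Type*} (G : SimpleGraph V) (t : Finset V) : ℕ :=
  ((t.powersetCard 2).filter fun e => ∃ a ∈ e, ∃ b ∈ e, G.Adj a b).card

/-- The two-graph associated with a graph: the 3-subsets of vertices carrying an odd number
of edges. -/
noncomputable def SimpleGraph.twoGraph {V : Type*} (G : SimpleGraph V) : Set (Finset V) :=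
  {t | t.card = 3 ∧ Odd (G.edgeCountIn t)}

open scoped Classical in
lemma switch_adj_iff {V : Type*} (G : SimpleGraph V) (Y : Set V) (u v : V) :
    (G.switch Y).Adj u v ↔
      (u ≠ v ∧ if (u ∈ Y) = (v ∈ Y) then G.Adj u v else ¬ G.Adj u v) := Iff.rfl

open scoped Classical in
lemma powersetCard_two_triple {V : Type*} {a b c : V} (hab : a ≠ b) (hac : a ≠ c)
    (hbc : b ≠ c) :
    ({a,b,c} : Finset V).powersetCard 2 = {{b,c},{a,c},{a,b}} := by
  have h2 : Finset.powersetCard 2 ({b,c} : Finset V) = {{b,c}} := by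
    rw [show (2:ℕ) = ({b,c}:Finset V).card by simp [hbc], Finset.powersetCard_self]
  have h1 : ({a,b,c} : Finset V) = insert a {b,c} := rfl
  rw [h1, show (2:ℕ) = 1 + 1 from rfl, Finset.powersetCard_succ_insert (by simp [hab, hac]),
    show Nat.succ 1 = 2 from rfl, h2, Finset.powersetCard_one]
  ext s
  simp [Finset.mem_insert]
  aesop

open scoped Classical in
lemma pairAdj {V : Type*} (G : SimpleGraph V) (x y : V) :
    (∃ a ∈ ({x,y} : Finset V), ∃ b ∈ ({x,y} : Finset V), G.Adj a b) ↔ G.Adj x y := by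
  simp only [Finset.mem_insert, Finset.mem_singleton]
  constructor
  · rintro ⟨a, (rfl|rfl), b, (rfl|rfl), h⟩
    · exact absurd h (G.irrefl)
    · exact h
    · exact h.symm
    · exact absurd h (G.irrefl)
  · exact fun h => ⟨x, Or.inl rfl, y, Or.inr rfl, h⟩

open scoped Classical in
lemma count3 {V : Type*} (G : SimpleGraph V) {a b c : V} (hab : a ≠ b) (hac : a ≠ c)
    (hbc : b ≠ c) :
    G.edgeCountIn {a,b,c} =
      (if G.Adj b c then 1 else 0) + (if G.Adj a c then 1 else 0) +
        (if G.Adj a b then 1 else 0) := by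
  have hne1 : ({b,c} : Finset V) ∉ ({{a,c},{a,b}} : Finset (Finset V)) := by
    simp only [Finset.mem_insert, Finset.mem_singleton]
    rintro (h | h) <;>
      · have : a ∈ ({b,c} : Finset V) := by rw [h]; simp
        simp only [Finset.mem_insert, Finset.mem_singleton] at this
        tauto
  have hne2 : ({a,c} : Finset V) ∉ ({{a,b}} : Finset (Finset V)) := by
    simp only [Finset.mem_singleton]
    intro h
    have : c ∈ ({a,b} : Finset V) := by rw [← h]; simp
    simp only [Finset.mem_insert, Finset.mem_singleton] at this
    tauto
  rw [SimpleGraph.edgeCountIn, powersetCard_two_triple hab hac hbc, Finset.card_filter,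
    Finset.sum_insert hne1, Finset.sum_insert hne2, Finset.sum_singleton]
  simp only [pairAdj]
  exact (add_assoc _ _ _).symm

lemma ind_parity (p q r p' q' r' : Prop) [Decidable p] [Decidable q] [Decidable r]
    [Decidable p'] [Decidable q'] [Decidable r'] :
    ((p ↔ p') ↔ ((q ↔ q') ↔ (r ↔ r'))) ↔
      (Odd ((if p then 1 else 0) + (if q then 1 else 0) + (if r then 1 else 0)) ↔
        Odd ((if p' then 1 else 0) + (if q' then 1 else 0) + (if r' then 1 else 0))) := by
  by_cases hp : p <;> by_cases hq : q <;> by_cases hr : r <;>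
    by_cases hp' : p' <;> by_cases hq' : q' <;> by_cases hr' : r' <;>
    simp [hp, hq, hr, hp', hq', hr', Nat.odd_iff]

set_option maxHeartbeats 2000000 in
/-- Two graphs on the same vertex set have the same associated two-graph if and only if they
are switching equivalent. -/
theorem twoGraph_eq_iff_switchEquiv {V : Type*} [Fintype V] (G₁ G₂ : SimpleGraph V) :
    G₁.twoGraph = G₂.twoGraph ↔ ∃ Y : Set V, G₁.switch Y = G₂ := by
  classical
  constructor
  · intro h
    cases isEmpty_or_nonempty V with
    | inl hE =>
        refine ⟨∅, ?_⟩
        ext u v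
        exact (hE.false u).elim
    | inr hN =>
        obtain ⟨v₀⟩ := hN
        let Y : Set V := {u | G₁.Adj u v₀ ↔ G₂.Adj u v₀}
        have hmem : ∀ u, u ∈ Y ↔ (G₁.Adj u v₀ ↔ G₂.Adj u v₀) := fun u => Iff.rfl
        have hv₀Y : v₀ ∈ Y := by
          rw [hmem]
          simp
        have key : ∀ a b c : V, a ≠ b → a ≠ c → b ≠ c →
            (Odd (G₁.edgeCountIn {a,b,c}) ↔ Odd (G₂.edgeCountIn {a,b,c})) := by
          intro a b c hab hac hbc
          have hcard : ({a,b,c} : Finset V).card = 3 := by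
            rw [Finset.card_insert_of_notMem (by simp [hab, hac]),
              Finset.card_insert_of_notMem (by simp [hbc]), Finset.card_singleton]
          have := Set.ext_iff.mp h ({a,b,c} : Finset V)
          simp only [SimpleGraph.twoGraph, Set.mem_setOf_eq, hcard, true_and] at this
          exact this
        have Hiff : ∀ u w : V, u ≠ w →
            ((G₁.Adj u w ↔ G₂.Adj u w) ↔ (u ∈ Y ↔ w ∈ Y)) := by
          intro u w huw
          by_cases hu : u = v₀
          · have f1 : G₁.Adj u w ↔ G₁.Adj w v₀ := by rw [hu]; exact SimpleGraph.adj_comm _ _ _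
            have f2 : G₂.Adj u w ↔ G₂.Adj w v₀ := by rw [hu]; exact SimpleGraph.adj_comm _ _ _
            have f3 : u ∈ Y := by rw [hu]; exact hv₀Y
            rw [f1, f2, ← hmem w]
            tauto
          · by_cases hw : w = v₀
            · have f1 : G₁.Adj u w ↔ G₁.Adj u v₀ := by rw [hw]
              have f2 : G₂.Adj u w ↔ G₂.Adj u v₀ := by rw [hw]
              have f3 : w ∈ Y := by rw [hw]; exact hv₀Y
              rw [f1, f2, ← hmem u]
              tauto
            · have h3 := key u w v₀ huw hu hw
              rw [count3 G₁ huw hu hw, count3 G₂ huw hu hw] at h3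
              rw [← ind_parity] at h3
              rw [hmem u, hmem w]
              by_cases A : G₁.Adj w v₀ ↔ G₂.Adj w v₀ <;>
                by_cases B : G₁.Adj u v₀ ↔ G₂.Adj u v₀ <;> tauto
        refine ⟨Y, ?_⟩
        ext u w
        rw [switch_adj_iff]
        by_cases huw : u = w
        · subst huw; simp
        · have h4 := Hiff u w huw
          by_cases hy : (u ∈ Y) = (w ∈ Y)
          · rw [if_pos hy]
            rw [eq_iff_iff] at hy
            have := h4.mpr hy
            constructor
            · rintro ⟨-, h5⟩; tauto
            · intro h5; exact ⟨huw, this.mpr h5⟩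
          · rw [if_neg hy]
            rw [eq_iff_iff] at hy
            have h6 : ¬(G₁.Adj u w ↔ G₂.Adj u w) := fun hh => hy (h4.mp hh)
            constructor
            · rintro ⟨-, h5⟩; tauto
            · intro h5
              refine ⟨huw, ?_⟩
              tauto
  · rintro ⟨Y, rfl⟩
    ext t
    simp only [SimpleGraph.twoGraph, Set.mem_setOf_eq, and_congr_right_iff]
    intro hcard
    obtain ⟨a, b, c, hab, hac, hbc, rfl⟩ := Finset.card_eq_three.mp hcard
    rw [count3 _ hab hac hbc, count3 _ hab hac hbc]
    rw [← ind_parity]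
    have hadj : ∀ x y : V, x ≠ y →
        ((G₁.Adj x y ↔ (G₁.switch Y).Adj x y) ↔ ((x ∈ Y) ↔ (y ∈ Y))) := by
      intro x y hxy
      rw [switch_adj_iff]
      by_cases hy : (x ∈ Y) = (y ∈ Y)
      · rw [if_pos hy]
        rw [eq_iff_iff] at hy
        constructor
        · intro _; exact hy
        · intro _
          constructor
          · intro hA; exact ⟨hxy, hA⟩
          · rintro ⟨-, hA⟩; exact hA
      · rw [if_neg hy]
        rw [eq_iff_iff] at hy
        constructor
        · intro h1
          exfalso
          by_cases hA : G₁.Adj x y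
          · exact (h1.mp hA).2 hA
          · exact hA (h1.mpr ⟨hxy, hA⟩)
        · intro h1; exact absurd h1 hy
    rw [hadj b c hbc, hadj a c hac, hadj a b hab]
    by_cases hA : a ∈ Y <;> by_cases hB : b ∈ Y <;> by_cases hC : c ∈ Y <;> tauto
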